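/- For every β > −1, every k ≥ 0, and every λ ∈ [0,1], the Nesterov residual polynomial satisfies |r_k(λ)| ≤ 1. -/

import Mathlib

/-- Momentum sequence `α_k = (k-1)/(k+β)`. -/
noncomputable def nesterovAlpha (β : ℝ) (k : ℕ) : ℝ := ((k : ℝ) - 1) / ((k : ℝ) + β)

/-- Residual polynomials of Nesterov's accelerated Landweber iteration. -/
noncomputable def nesterovRes (β : ℝ) : ℕ → ℝ → ℝ
  | 0, _ => 1
  | 1, l => 1 - l
  | (k + 2), l =>
      (1 - l) * (nesterovRes β (k + 1) l +
        nesterovAlpha β (k + 1) * (nesterovRes β (k + 1) l - nesterovRes β k l))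

/-- One step of the Lyapunov estimate: `F = l*v^2 + (v-u)^2` does not increase. -/
lemma nesterov_step (l a v u : ℝ) (hl0 : 0 ≤ l) (hl1 : l ≤ 1)
    (ha0 : 0 ≤ a) (ha1 : a ≤ 1) :
    l * ((1 - l) * (v + a * (v - u)))^2 + ((1 - l) * (v + a * (v - u)) - v)^2
      ≤ l * v^2 + (v - u)^2 := by
  have key : l * v^2 + (v - u)^2
      - (l * ((1 - l) * (v + a * (v - u)))^2 + ((1 - l) * (v + a * (v - u)) - v)^2)
      = l^2 * (1 - l) * (v + a * (v - u))^2 + (1 - (1 - l) * a^2) * (v - u)^2 := by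
    ring
  have h1 : 0 ≤ l^2 * (1 - l) * (v + a * (v - u))^2 :=
    mul_nonneg (mul_nonneg (sq_nonneg l) (by linarith)) (sq_nonneg _)
  have h2 : 0 ≤ (1 - (1 - l) * a^2) * (v - u)^2 := by
    have : (1 - l) * a^2 ≤ 1 := by nlinarith [sq_nonneg a]
    exact mul_nonneg (by linarith) (sq_nonneg _)
  linarith

lemma nesterovRes_zero (β : ℝ) : ∀ k, nesterovRes β k 0 = 1 := by
  intro k
  induction k using Nat.twoStepInduction with
  | zero => rfl
  | one => norm_num [nesterovRes]
  | more k ih1 ih2 => simp [nesterovRes, ih1, ih2]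

lemma nesterovAlpha_mem (β : ℝ) (hβ : -1 < β) (k : ℕ) :
    0 ≤ nesterovAlpha β (k + 1) ∧ nesterovAlpha β (k + 1) ≤ 1 := by
  have hden : 0 < ((k + 1 : ℕ) : ℝ) + β := by
    push_cast; linarith [Nat.cast_nonneg (α := ℝ) k]
  have hnum : (0 : ℝ) ≤ ((k + 1 : ℕ) : ℝ) - 1 := by
    push_cast; linarith [Nat.cast_nonneg (α := ℝ) k]
  constructor
  · exact div_nonneg hnum hden.le
  · rw [nesterovAlpha, div_le_one hden]; linarith

/-- The Lyapunov invariant: `l * r_{k+1}^2 + (r_{k+1} - r_k)^2 ≤ l*(1-l)^2 + l^2`. -/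
lemma nesterov_invariant (β : ℝ) (hβ : -1 < β) (l : ℝ) (hl0 : 0 ≤ l) (hl1 : l ≤ 1) :
    ∀ k, l * (nesterovRes β (k + 1) l)^2
        + (nesterovRes β (k + 1) l - nesterovRes β k l)^2
      ≤ l * (1 - l)^2 + l^2 := by
  intro k
  induction k with
  | zero =>
      simp only [nesterovRes]
      apply le_of_eq
      ring
  | succ k ih =>
      obtain ⟨ha0, ha1⟩ := nesterovAlpha_mem β hβ k
      have hrec : nesterovRes β (k + 2) l
          = (1 - l) * (nesterovRes β (k + 1) l
            + nesterovAlpha β (k + 1) * (nesterovRes β (k + 1) l - nesterovRes β k l)) := rfl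
      calc l * (nesterovRes β (k + 2) l)^2
            + (nesterovRes β (k + 2) l - nesterovRes β (k + 1) l)^2
          ≤ l * (nesterovRes β (k + 1) l)^2
            + (nesterovRes β (k + 1) l - nesterovRes β k l)^2 := by
            rw [hrec]
            exact nesterov_step l (nesterovAlpha β (k + 1))
              (nesterovRes β (k + 1) l) (nesterovRes β k l) hl0 hl1 ha0 ha1
        _ ≤ l * (1 - l)^2 + l^2 := ih

theorem nesterov_residual_bound (β : ℝ) (hβ : -1 < β) (k : ℕ)
    (l : ℝ) (hl : l ∈ Set.Icc (0 : ℝ) 1) :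
    |nesterovRes β k l| ≤ 1 := by
  obtain ⟨hl0, hl1⟩ := hl
  rcases eq_or_lt_of_le hl0 with h0 | h0
  · rw [← h0, nesterovRes_zero]; norm_num
  · cases k with
    | zero => show |(1 : ℝ)| ≤ 1; norm_num
    | succ k =>
        have hinv := nesterov_invariant β hβ l hl0 hl1 k
        have hsq : (nesterovRes β (k + 1) l)^2 ≤ 1 := by
          have h2 : l * (nesterovRes β (k + 1) l)^2 ≤ l * (1 - l)^2 + l^2 := by
            nlinarith [sq_nonneg (nesterovRes β (k + 1) l - nesterovRes β k l)]
          have h3 : (nesterovRes β (k + 1) l)^2 ≤ (1 - l)^2 + l := by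
            rw [← mul_le_mul_iff_right₀ h0]; linarith [h2]; 
          nlinarith
        rw [abs_le]
        constructor <;> nlinarith [hsq]
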